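/- The cusp trajectory Ω(y,t) = 0 of the one-cuspon solution, mapped to the physical x-axis via X(y,t) = y/√u₀ + u₀t + const along Ω = 0, moves with velocity dx/dt = 2(u₀ - 1/(4λ₁²)). Consequently: if u₀ > 1/(2λ₁²) the cusp moves right; if 1/(4λ₁²) < u₀ < 1/(2λ₁²) it moves right; if u₀ < 1/(4λ₁²) it moves left; and u₀ = 1/(4λ₁²) gives a standing wave. -/

import Mathlib

/-- the cusp trajectory, with `y(t) = √u₀(u₀ - 1/(2λ₁²))t` on the
cusp line `Ω = 0` and `x(t) = y(t)/√u₀ + u₀t + c`, moves with velocity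
`dx/dt = 2(u₀ - 1/(4λ₁²))`; it moves right if `u₀ > 1/(2λ₁²)` or
`1/(4λ₁²) < u₀ < 1/(2λ₁²)`, left if `u₀ < 1/(4λ₁²)`, and stands if
`u₀ = 1/(4λ₁²)`. -/
theorem cusp_velocity
    (u₀ lam₁ c : ℝ) (hu₀ : 0 < u₀) (hlam₁ : lam₁ ≠ 0)
    (y x : ℝ → ℝ)
    (hy : ∀ t, y t = Real.sqrt u₀ * (u₀ - 1 / (2 * lam₁ ^ 2)) * t)
    (hx : ∀ t, x t = y t / Real.sqrt u₀ + u₀ * t + c) :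
    ∀ t, HasDerivAt x (2 * (u₀ - 1 / (4 * lam₁ ^ 2))) t ∧
      (u₀ > 1 / (2 * lam₁ ^ 2) → 0 < deriv x t) ∧
      (1 / (4 * lam₁ ^ 2) < u₀ ∧ u₀ < 1 / (2 * lam₁ ^ 2) → 0 < deriv x t) ∧
      (u₀ < 1 / (4 * lam₁ ^ 2) → deriv x t < 0) ∧
      (u₀ = 1 / (4 * lam₁ ^ 2) → deriv x t = 0) := by
  have hs : Real.sqrt u₀ ≠ 0 := ne_of_gt (Real.sqrt_pos.mpr hu₀)
  have hl : lam₁ ^ 2 ≠ 0 := pow_ne_zero 2 hlam₁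
  have hxf : ∀ t, x t = (2 * (u₀ - 1 / (4 * lam₁ ^ 2))) * t + c := by
    intro t
    rw [hx, hy]
    field_simp
    ring
  have hd : ∀ t, HasDerivAt x (2 * (u₀ - 1 / (4 * lam₁ ^ 2))) t := by
    intro t
    have : HasDerivAt (fun t => (2 * (u₀ - 1 / (4 * lam₁ ^ 2))) * t + c)
        (2 * (u₀ - 1 / (4 * lam₁ ^ 2))) t := by
      have h := ((hasDerivAt_id t).const_mul (2 * (u₀ - 1 / (4 * lam₁ ^ 2)))).add_const c
      simpa only [mul_one, id_eq] using h
    exact this.congr_of_eventuallyEq (Filter.Eventually.of_forall fun s => hxf s)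
  intro t
  have hdd : deriv x t = 2 * (u₀ - 1 / (4 * lam₁ ^ 2)) := (hd t).deriv
  refine ⟨hd t, ?_, ?_, ?_, ?_⟩ <;> rw [hdd]
  · intro h
    have h2 : (0:ℝ) < lam₁ ^ 2 := lt_of_le_of_ne (sq_nonneg _) (Ne.symm hl)
    have : 1 / (4 * lam₁ ^ 2) < 1 / (2 * lam₁ ^ 2) := by
      apply one_div_lt_one_div_of_lt <;> nlinarith
    nlinarith
  · rintro ⟨h1, _⟩; nlinarith
  · intro h; nlinarith
  · intro h; nlinarith
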